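/- arXiv:2212.13320 — 2 statements merged into one kernel-verified Lean document; each statement's English description precedes it below -/
import Mathlib

section
/- Let (λ_b) be a sequence of real numbers indexed by natural numbers b ≥ 2 such that for each b, λ_b > 1 and λ_b^(2b) − λ_b^(2b−1) − λ_b^b − λ_b + 1 = 0. Then λ_b tends to 1 as b → ∞. -/
theorem stmt_1 (lam : ℕ → ℝ)
    (h1 : ∀ b : ℕ, 2 ≤ b → 1 < lam b)
    (h2 : ∀ b : ℕ, 2 ≤ b →
      (lam b) ^ (2 * b) - (lam b) ^ (2 * b - 1) - (lam b) ^ b - lam b + 1 = 0) :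
    Filter.Tendsto lam Filter.atTop (nhds 1) := by
  rw [Metric.tendsto_atTop]
  intro ε hε
  obtain ⟨N, hN⟩ := exists_nat_ge (2 / ε ^ 2)
  refine ⟨N + 2, fun b hb => ?_⟩
  have hb2 : 2 ≤ b := le_trans (by omega) hb
  have hl := h1 b hb2
  have heq := h2 b hb2
  set l := lam b with hldef
  have hl0 : 0 < l := by linarith
  have key : l ^ (b - 1) * (l - 1) < 2 := by
    have e0 : l ^ (2 * b) = l ^ (2 * b - 1) * l := by
      rw [← pow_succ]; congr 1; omega
    have hlb : l ≤ l ^ b := le_self_pow₀ (le_of_lt hl) (by omega)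
    have e2 : l ^ (2 * b - 1) = l ^ b * l ^ (b - 1) := by
      rw [← pow_add]; congr 1; omega
    have hpb : 0 < l ^ b := pow_pos hl0 b
    nlinarith [pow_pos hl0 (b - 1)]
  have hlt : l - 1 < ε := by
    by_contra hcon
    push_neg at hcon
    have h1e : 1 + ε ≤ l := by linarith
    have hp : (1 : ℝ) + (b - 1 : ℕ) * ε ≤ (1 + ε) ^ (b - 1) := by
      have := one_add_mul_le_pow (by linarith : (-2:ℝ) ≤ ε) (b - 1)
      linarith
    have hple : (1 + ε) ^ (b - 1) ≤ l ^ (b - 1) :=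
      pow_le_pow_left₀ (by linarith) h1e _
    have hb1 : (N : ℝ) ≤ ((b - 1 : ℕ) : ℝ) := by
      exact_mod_cast (by omega : N ≤ b - 1)
    have hNe : 2 ≤ ((b - 1 : ℕ) : ℝ) * ε ^ 2 := by
      have h2e : 2 / ε ^ 2 ≤ ((b - 1 : ℕ) : ℝ) := le_trans hN hb1
      have hε2 : 0 < ε ^ 2 := by positivity
      rw [div_le_iff₀ hε2] at h2e
      linarith
    nlinarith [pow_pos hl0 (b - 1), sq_nonneg ε]
  rw [Real.dist_eq, abs_of_pos (by linarith)]
  linarith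
end

section
/- Let q = X^30 − X^29 − X^27 + X^26 + X^25 − X^24 − X^22 + X^21 − X^20 + X^19 − X^17 + X^16 − X^15 + X^14 − X^13 + X^11 − X^10 + X^9 − X^8 − X^6 + X^5 + X^4 − X^3 − X + 1 in ℤ[X]. Then X^34 − X^31 − 2X^24 − X^17 − 2X^10 − X^3 + 1 = (X^4 + X^3 + X^2 + X + 1)·q, and q has a real root strictly greater than 1 (in particular q is not a product of cyclotomic polynomials). -/
open Polynomial

theorem stmt_17 :
    let q : ℤ[X] := X ^ 30 - X ^ 29 - X ^ 27 + X ^ 26 + X ^ 25 - X ^ 24 - X ^ 22 + X ^ 21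
      - X ^ 20 + X ^ 19 - X ^ 17 + X ^ 16 - X ^ 15 + X ^ 14 - X ^ 13 + X ^ 11 - X ^ 10
      + X ^ 9 - X ^ 8 - X ^ 6 + X ^ 5 + X ^ 4 - X ^ 3 - X + 1
    ((X : ℤ[X]) ^ 34 - X ^ 31 - 2 * X ^ 24 - X ^ 17 - 2 * X ^ 10 - X ^ 3 + 1 =
        (X ^ 4 + X ^ 3 + X ^ 2 + X + 1) * q) ∧
      (∃ x : ℝ, 1 < x ∧ Polynomial.aeval x q = 0) ∧
      ¬ ∃ s : Multiset ℕ, q = (s.map (fun n => Polynomial.cyclotomic n ℤ)).prod := by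
  intro q
  have hroot : ∃ x : ℝ, 1 < x ∧ Polynomial.aeval x q = 0 := by
    have hcont : Continuous fun x : ℝ => Polynomial.aeval x q :=
      Polynomial.continuous_aeval q
    have h1 : Polynomial.aeval (1 : ℝ) q = -1 := by
      simp only [q, map_add, map_sub, map_pow, map_mul, aeval_X, aeval_one, map_one]
      norm_num
    have h2 : Polynomial.aeval (2 : ℝ) q = 483828967 := by
      simp only [q, map_add, map_sub, map_pow, map_mul, aeval_X, aeval_one, map_one]
      norm_num
    have := intermediate_value_Ioo (by norm_num : (1:ℝ) ≤ 2) hcont.continuousOn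
    have hmem : (0 : ℝ) ∈ Set.Ioo (Polynomial.aeval (1:ℝ) q) (Polynomial.aeval (2:ℝ) q) := by
      rw [h1, h2]; constructor <;> norm_num
    obtain ⟨x, hx, hfx⟩ := this hmem
    exact ⟨x, hx.1, hfx⟩
  refine ⟨by ring, hroot, ?_⟩
  rintro ⟨s, hs⟩
  obtain ⟨x, hx1, hx0⟩ := hroot
  have hpos : 0 < Polynomial.aeval x q := by
    rw [hs]
    rw [map_multiset_prod]
    apply Multiset.prod_pos
    intro a ha
    rw [Multiset.mem_map] at ha
    obtain ⟨b, hb, rfl⟩ := ha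
    rw [Multiset.mem_map] at hb
    obtain ⟨n, hn, rfl⟩ := hb
    have : Polynomial.aeval x (Polynomial.cyclotomic n ℤ) =
        Polynomial.eval x (Polynomial.cyclotomic n ℝ) := by
      rw [← map_cyclotomic_int n ℝ, aeval_def, eval_map]
      norm_num
    rw [this]
    exact cyclotomic_pos' n hx1
  rw [hx0] at hpos
  exact lt_irrefl _ hpos
end
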